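/- For every η > 0, t > 0, and m > −1, there exists a constant C_m > 0 (depending only on m) such that ∫_ℝ (1 + |ξ|^m) exp(−ηt(|ξ|³ − |ξ|)) dξ ≤ C_m (e^{3ηt}/(ηt)^{1/3} + 1/(ηt)^{(m+1)/3}). -/

import Mathlib

open MeasureTheory

open Real Set in
private lemma my_integrable_comp_abs {f : ℝ → ℝ} (hf : IntegrableOn f (Ioi 0)) :
    Integrable (fun x => f |x|) := by
  have hIoi : IntegrableOn (fun x => f |x|) (Ioi 0) := by
    refine hf.congr_fun (fun x hx => ?_) measurableSet_Ioi
    rw [abs_eq_self.mpr (le_of_lt hx)]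
  have int_Iic : IntegrableOn (fun x ↦ f |x|) (Iic 0) := by
    rw [← Measure.map_neg_eq_self (volume : Measure ℝ)]
    have m : MeasurableEmbedding fun x : ℝ => -x := (Homeomorph.neg ℝ).measurableEmbedding
    rw [m.integrableOn_map_iff]
    simp_rw [Function.comp_def, abs_neg, neg_preimage, neg_Iic, neg_zero]
    exact Iff.mpr integrableOn_Ici_iff_integrableOn_Ioi hIoi
  have := int_Iic.union hIoi
  rwa [Iic_union_Ioi, integrableOn_univ] at this

open Real in
private lemma my_scalar {s a c₁ c₂ : ℝ} (hs : 0 < s) (ha : 0 ≤ a) (h1 : 0 ≤ c₁)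
    (h2 : 0 ≤ c₂) :
    Real.exp (2*s/3) * (c₁ * s ^ (-((1:ℝ)/3)) + c₂ * s ^ (-a)) ≤
      (c₁ + 3*c₂) * (Real.exp (3*s) * s ^ (-((1:ℝ)/3)) + s ^ (-a)) := by
  have hP : (0:ℝ) ≤ s ^ (-((1:ℝ)/3)) := rpow_nonneg hs.le _
  have hQ : (0:ℝ) ≤ s ^ (-a) := rpow_nonneg hs.le _
  have e1 : Real.exp (2*s/3) ≤ Real.exp (3*s) := exp_le_exp.mpr (by linarith)
  have T1 : Real.exp (2*s/3) * (c₁ * s ^ (-((1:ℝ)/3))) ≤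
      c₁ * (Real.exp (3*s) * s ^ (-((1:ℝ)/3)) + s ^ (-a)) := by
    nlinarith [mul_le_mul_of_nonneg_right e1 hP, Real.exp_pos (2*s/3)]
  have T2 : Real.exp (2*s/3) * (c₂ * s ^ (-a)) ≤
      3*c₂ * (Real.exp (3*s) * s ^ (-((1:ℝ)/3)) + s ^ (-a)) := by
    rcases le_or_gt s 1 with hs1 | hs1
    · have h33 : Real.exp (2*s/3) ≤ 3 := by
        calc Real.exp (2*s/3) ≤ Real.exp 1 := exp_le_exp.mpr (by linarith)
          _ ≤ 3 := by linarith [Real.exp_one_lt_d9]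
      calc Real.exp (2*s/3) * (c₂ * s ^ (-a)) ≤ 3 * (c₂ * s ^ (-a)) :=
            mul_le_mul_of_nonneg_right h33 (mul_nonneg h2 hQ)
        _ ≤ 3*c₂ * (Real.exp (3*s) * s ^ (-((1:ℝ)/3)) + s ^ (-a)) := by
            nlinarith [mul_nonneg h2 (mul_nonneg (Real.exp_pos (3*s)).le hP)]
    · have hQ1 : s ^ (-a) ≤ 1 :=
        Real.rpow_le_one_of_one_le_of_nonpos hs1.le (neg_nonpos.mpr ha)
      have h3 : s ^ ((1:ℝ)/3) ≤ Real.exp s := by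
        calc s ^ ((1:ℝ)/3) ≤ s ^ (1:ℝ) :=
              Real.rpow_le_rpow_of_exponent_le hs1.le (by norm_num)
          _ = s := rpow_one s
          _ ≤ Real.exp s := by linarith [Real.add_one_le_exp s]
      have hP' : Real.exp (-s) ≤ s ^ (-((1:ℝ)/3)) := by
        rw [Real.exp_neg, Real.rpow_neg hs.le]
        exact inv_anti₀ (rpow_pos_of_pos hs _) h3
      have hEP : Real.exp (2*s/3) ≤ Real.exp (3*s) * s ^ (-((1:ℝ)/3)) := by
        calc Real.exp (2*s/3) ≤ Real.exp (2*s) := exp_le_exp.mpr (by linarith)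
          _ = Real.exp (3*s) * Real.exp (-s) := by rw [← Real.exp_add]; ring_nf
          _ ≤ Real.exp (3*s) * s ^ (-((1:ℝ)/3)) :=
              mul_le_mul_of_nonneg_left hP' (Real.exp_pos _).le
      nlinarith [mul_nonneg (mul_nonneg (Real.exp_pos (3*s)).le hP) h2,
        mul_le_mul_of_nonneg_right hEP h2, Real.exp_pos (2*s/3)]
  calc Real.exp (2*s/3) * (c₁ * s ^ (-((1:ℝ)/3)) + c₂ * s ^ (-a))
      = Real.exp (2*s/3) * (c₁ * s ^ (-((1:ℝ)/3)))
        + Real.exp (2*s/3) * (c₂ * s ^ (-a)) := by ring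
    _ ≤ c₁ * (Real.exp (3*s) * s ^ (-((1:ℝ)/3)) + s ^ (-a))
        + 3*c₂ * (Real.exp (3*s) * s ^ (-((1:ℝ)/3)) + s ^ (-a)) := add_le_add T1 T2
    _ = (c₁ + 3*c₂) * (Real.exp (3*s) * s ^ (-((1:ℝ)/3)) + s ^ (-a)) := by ring

theorem stmt4 : ∀ m : ℝ, -1 < m → ∃ C > (0:ℝ), ∀ η t : ℝ, 0 < η → 0 < t →
    (∫ ξ : ℝ, (1 + |ξ| ^ m) * Real.exp (-(η * t) * (|ξ| ^ 3 - |ξ|))) ≤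
      C * (Real.exp (3 * η * t) / (η * t) ^ ((1:ℝ)/3) + 1 / (η * t) ^ ((m + 1) / 3)) := by
  intro m hm
  have hm1 : (0:ℝ) < (m + 1) / 3 := by linarith
  have hG1 : 0 < Real.Gamma ((1:ℝ)/3) := Real.Gamma_pos_of_pos (by norm_num)
  have hG2 : 0 < Real.Gamma ((m+1)/3) := Real.Gamma_pos_of_pos hm1
  set c₁ : ℝ := 2 * (((2:ℝ)/3) ^ (-((1:ℝ)/3)) * (1/3) * Real.Gamma ((1:ℝ)/3)) with hc₁def
  set c₂ : ℝ := 2 * (((2:ℝ)/3) ^ (-((m+1)/3)) * (1/3) * Real.Gamma ((m+1)/3)) with hc₂def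
  have hc₁ : 0 < c₁ := by positivity
  have hc₂ : 0 < c₂ := by positivity
  refine ⟨c₁ + 3*c₂, by positivity, ?_⟩
  intro η t hη ht
  set s := η * t with hsdef
  have hs : 0 < s := mul_pos hη ht
  have hb : (0:ℝ) < 2*s/3 := by positivity
  set f : ℝ → ℝ := fun x => Real.exp (2*s/3) * ((1 + x ^ m) * Real.exp (-(2*s/3) * x ^ 3))
    with hfdef
  have h₁ := integrableOn_rpow_mul_exp_neg_mul_rpow (p := 3) (s := 0) (b := 2*s/3)
    (by norm_num) (by norm_num) hb
  have h₂ := integrableOn_rpow_mul_exp_neg_mul_rpow (p := 3) (s := m) (b := 2*s/3)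
    hm (by norm_num) hb
  have hEq : ∀ x ∈ Set.Ioi (0:ℝ),
      Real.exp (2*s/3) * (x ^ (0:ℝ) * Real.exp (-(2*s/3) * x ^ (3:ℝ))
        + x ^ m * Real.exp (-(2*s/3) * x ^ (3:ℝ))) = f x := by
    intro x hx
    have h3 : x ^ (3:ℝ) = x ^ (3:ℕ) := by
      rw [show ((3:ℝ)) = ((3:ℕ):ℝ) by norm_num, Real.rpow_natCast]
    rw [Real.rpow_zero, h3, hfdef]
    ring
  have hfint : IntegrableOn f (Set.Ioi 0) := by
    have base : IntegrableOn (fun x : ℝ => Real.exp (2*s/3) *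
        (x ^ (0:ℝ) * Real.exp (-(2*s/3) * x ^ (3:ℝ))
          + x ^ m * Real.exp (-(2*s/3) * x ^ (3:ℝ)))) (Set.Ioi 0) :=
      (h₁.add h₂).const_mul (Real.exp (2*s/3))
    exact base.congr_fun hEq measurableSet_Ioi
  have hint : Integrable (fun ξ : ℝ => f |ξ|) := my_integrable_comp_abs hfint
  have hmono : (∫ ξ : ℝ, (1 + |ξ| ^ m) * Real.exp (-(η * t) * (|ξ| ^ 3 - |ξ|))) ≤
      ∫ ξ : ℝ, f |ξ| := by
    refine integral_mono_of_nonneg (Filter.Eventually.of_forall fun ξ => by positivity) hint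
      (Filter.Eventually.of_forall fun ξ => ?_)
    set x := |ξ| with hxdef
    have hx : 0 ≤ x := abs_nonneg ξ
    have h1 : (0:ℝ) ≤ 1 + x ^ m := by positivity
    have h2 : Real.exp (-(η*t) * (x^3 - x)) ≤
        Real.exp (2*s/3) * Real.exp (-(2*s/3) * x^3) := by
      rw [← Real.exp_add]
      apply Real.exp_le_exp.mpr
      rw [← hsdef]
      nlinarith [mul_nonneg (mul_nonneg hs.le (sq_nonneg (x-1)))
        (by linarith : (0:ℝ) ≤ x + 2)]
    calc (1 + x ^ m) * Real.exp (-(η*t) * (x^3 - x))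
        ≤ (1 + x ^ m) * (Real.exp (2*s/3) * Real.exp (-(2*s/3) * x^3)) :=
          mul_le_mul_of_nonneg_left h2 h1
      _ = f x := by rw [hfdef]; ring
  have I₁ := integral_rpow_mul_exp_neg_mul_rpow (p := 3) (q := 0) (b := 2*s/3)
    (by norm_num) (by norm_num) hb
  have I₂ := integral_rpow_mul_exp_neg_mul_rpow (p := 3) (q := m) (b := 2*s/3)
    (by norm_num) hm hb
  have habs : (∫ ξ : ℝ, f |ξ|) = 2 * ∫ x in Set.Ioi (0:ℝ), f x := integral_comp_abs
  have hval : (∫ x in Set.Ioi (0:ℝ), f x) =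
      Real.exp (2*s/3) * ((2*s/3) ^ (-((0:ℝ)+1)/3) * (1/3) * Real.Gamma (((0:ℝ)+1)/3)
        + (2*s/3) ^ (-(m+1)/3) * (1/3) * Real.Gamma ((m+1)/3)) := by
    rw [← setIntegral_congr_fun measurableSet_Ioi hEq, integral_const_mul,
      integral_add h₁ h₂, I₁, I₂]
  have hpow : ∀ e : ℝ, ((2:ℝ)*s/3) ^ e = ((2:ℝ)/3) ^ e * s ^ e := by
    intro e
    rw [show (2:ℝ)*s/3 = (2/3) * s by ring, Real.mul_rpow (by norm_num) hs.le]
  have hval2 : (∫ ξ : ℝ, f |ξ|) =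
      Real.exp (2*s/3) * (c₁ * s ^ (-((1:ℝ)/3)) + c₂ * s ^ (-((m+1)/3))) := by
    rw [habs, hval, show (-((0:ℝ)+1)/3) = (-((1:ℝ)/3)) by norm_num,
      show (((0:ℝ)+1)/3) = ((1:ℝ)/3) by norm_num,
      show (-(m+1)/3) = (-((m+1)/3)) by ring, hpow, hpow, hc₁def, hc₂def]
    ring
  have hfinal := my_scalar (a := (m+1)/3) hs hm1.le hc₁.le hc₂.le
  have hRHS : (c₁ + 3*c₂) * (Real.exp (3 * η * t) / (η * t) ^ ((1:ℝ)/3)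
      + 1 / (η * t) ^ ((m + 1) / 3)) =
      (c₁ + 3*c₂) * (Real.exp (3*s) * s ^ (-((1:ℝ)/3)) + s ^ (-((m+1)/3))) := by
    rw [show (3 * η * t) = 3 * s by rw [hsdef]; ring, ← hsdef,
      Real.rpow_neg hs.le, Real.rpow_neg hs.le]
    ring
  rw [hRHS]
  calc (∫ ξ : ℝ, (1 + |ξ| ^ m) * Real.exp (-(η * t) * (|ξ| ^ 3 - |ξ|)))
      ≤ ∫ ξ : ℝ, f |ξ| := hmono
    _ = Real.exp (2*s/3) * (c₁ * s ^ (-((1:ℝ)/3)) + c₂ * s ^ (-((m+1)/3))) := hval2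
    _ ≤ (c₁ + 3*c₂) * (Real.exp (3*s) * s ^ (-((1:ℝ)/3)) + s ^ (-((m+1)/3))) := hfinal
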